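/- For the convex problem f* = min{f(y) : Ay = b, g(y) ≤ 0, y ∈ Y}, under the Slater condition (existence of κ > 0 and y₀ ∈ ri(Y) with g(y₀) ≤ −κ𝟙 and Ay₀ = b), let r satisfy 0 < r ≤ κ/(2 L(g)) and B(y₀, r) ∩ Aff(Y) ⊆ Y; let ρ* > 0 be such that B_q(0, ρ*) ∩ (A·Aff(Y) − b) ⊆ A(B(y₀, r) ∩ Aff(Y)) − b; and let 𝓛 be any lower bound on f*. Then any ε-optimal solution (λ(ε), μ(ε)) of the dual problem max{θ(λ,μ) : μ ≥ 0, λ = Ay − b, y ∈ Aff(Y)} satisfies ‖(λ(ε), μ(ε))‖ ≤ (f(y₀) − 𝓛 + ε + L(f)·r)/min(ρ*, κ/2). -/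

import Mathlib

open Matrix
open scoped RealInnerProductSpace

/-- Bound on the norm of ε-optimal dual solutions (Proposition 3.1). -/
theorem stmt_3 {n q p : ℕ}
    (Y : Set (EuclideanSpace ℝ (Fin n))) (hYcl : IsClosed Y) (hYconv : Convex ℝ Y)
    (A : Matrix (Fin q) (Fin n) ℝ) (b : Fin q → ℝ)
    (f : EuclideanSpace ℝ (Fin n) → ℝ)
    (g : EuclideanSpace ℝ (Fin n) → Fin p → ℝ)
    (hfconv : ConvexOn ℝ Y f)
    (Lf : ℝ) (hLf : 0 ≤ Lf)
    (hflip : ∀ y₁ ∈ Y, ∀ y₂ ∈ Y, |f y₁ - f y₂| ≤ Lf * ‖y₁ - y₂‖)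
    (hgconv : ∀ i, ConvexOn ℝ Y (fun y => g y i))
    (Lg : ℝ) (hLg : 0 < Lg)
    (hglip : ∀ i, ∀ y₁ ∈ Y, ∀ y₂ ∈ Y, |g y₁ i - g y₂ i| ≤ Lg * ‖y₁ - y₂‖)
    -- f* is the optimal value (f bounded below on the feasible set):
    (fstar : ℝ)
    (hfstar : IsGLB {v : ℝ | ∃ y ∈ Y,
      A *ᵥ y = b ∧ (∀ i, g y i ≤ 0) ∧ v = f y} fstar)
    -- Slater condition SL:
    (κ : ℝ) (hκ : 0 < κ)
    (y₀ : EuclideanSpace ℝ (Fin n)) (hy₀ : y₀ ∈ intrinsicInterior ℝ Y)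
    (hy₀g : ∀ i, g y₀ i ≤ -κ) (hy₀A : A *ᵥ y₀ = b)
    -- radius r with B(y₀, r) ∩ Aff(Y) ⊆ Y:
    (r : ℝ) (hr : 0 < r) (hrκ : r ≤ κ / (2 * Lg))
    (hrY : Metric.closedBall y₀ r ∩ (affineSpan ℝ Y : Set (EuclideanSpace ℝ (Fin n))) ⊆ Y)
    -- ρ* > 0 with B_q(0, ρ*) ∩ (A·Aff(Y) − b) ⊆ A(B(y₀, r) ∩ Aff(Y)) − b:
    (ρstar : ℝ) (hρstar : 0 < ρstar)
    (hincl : ∀ z : EuclideanSpace ℝ (Fin q), ‖z‖ ≤ ρstar →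
      (∃ y ∈ (affineSpan ℝ Y : Set (EuclideanSpace ℝ (Fin n))), z = A *ᵥ y - b) →
      ∃ y ∈ Metric.closedBall y₀ r ∩ (affineSpan ℝ Y : Set (EuclideanSpace ℝ (Fin n))),
        z = A *ᵥ y - b)
    -- 𝓛 is any lower bound on f*:
    (𝓛 : ℝ) (h𝓛 : 𝓛 ≤ fstar)
    (ε : ℝ) (hε : 0 ≤ ε)
    -- (λ(ε), μ(ε)) is an ε-optimal feasible solution of the dual problem:
    (lam : EuclideanSpace ℝ (Fin q)) (mu : Fin p → ℝ) (hmu : 0 ≤ mu)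
    (hlamfeas : ∃ y ∈ (affineSpan ℝ Y : Set (EuclideanSpace ℝ (Fin n))),
      lam = (A *ᵥ y - b : Fin q → ℝ))
    -- θ(λ(ε), μ(ε)) ≥ f* − ε (the dual optimal value is f* by strong duality):
    (hdualopt : ∀ y ∈ Y,
      f y + lam ⬝ᵥ (A *ᵥ y - b) + mu ⬝ᵥ g y ≥ fstar - ε) :
    Real.sqrt (‖lam‖ ^ 2 + (∑ i, (mu i) ^ 2)) ≤
      (f y₀ - 𝓛 + ε + Lf * r) / min ρstar (κ / 2) := by
  classical
  have hy₀Y : y₀ ∈ Y := intrinsicInterior_subset hy₀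
  set a : ℝ := ‖lam‖ with ha
  have ha0 : 0 ≤ a := norm_nonneg _
  set c : ℝ := Real.sqrt (∑ i, (mu i) ^ 2) with hc
  have hc0 : 0 ≤ c := Real.sqrt_nonneg _
  have hc2 : c ^ 2 = ∑ i, (mu i) ^ 2 := by
    rw [hc, Real.sq_sqrt (Finset.sum_nonneg fun i _ => sq_nonneg _)]
  set t : ℝ := if lam = 0 then 0 else -(ρstar / a) with htdef
  obtain ⟨y', hy'span, hy'⟩ := hlamfeas
  set y₂ : EuclideanSpace ℝ (Fin n) := t • (y' - y₀) + y₀ with hy₂def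
  have hy₂span : y₂ ∈ affineSpan ℝ Y := by
    have := AffineSubspace.smul_vsub_vadd_mem (affineSpan ℝ Y) t hy'span
      (subset_affineSpan ℝ Y hy₀Y) (subset_affineSpan ℝ Y hy₀Y)
    simpa [vsub_eq_sub, vadd_eq_add] using this
  have hz : (t • lam : EuclideanSpace ℝ (Fin q)) = A *ᵥ y₂ - b := by
    funext j
    have h1 : (A *ᵥ y₂) j = t * ((A *ᵥ y') j - (A *ᵥ y₀) j) + (A *ᵥ y₀) j := by
      simp only [hy₂def, Matrix.mulVec, dotProduct, PiLp.add_apply, PiLp.smul_apply,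
        PiLp.sub_apply, smul_eq_mul]
      rw [← Finset.sum_sub_distrib, Finset.mul_sum, ← Finset.sum_add_distrib]
      exact Finset.sum_congr rfl fun i _ => by ring
    have h2 : lam j = (A *ᵥ y') j - b j := by rw [hy']; rfl
    have h3 : (t • lam : EuclideanSpace ℝ (Fin q)) j = t * lam j := rfl
    show (t • lam : EuclideanSpace ℝ (Fin q)) j = (A *ᵥ y₂) j - b j
    rw [h3, h1, hy₀A, h2]
    ring
  have hznorm : ‖(t • lam : EuclideanSpace ℝ (Fin q))‖ ≤ ρstar := by
    rw [norm_smul]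
    by_cases h : lam = 0
    · simp [h, hρstar.le]
    · have ha' : 0 < a := norm_pos_iff.mpr h
      rw [htdef, Real.norm_eq_abs, if_neg h, abs_neg, abs_of_nonneg (div_nonneg hρstar.le ha0)]
      rw [div_mul_cancel₀ _ (ne_of_gt ha')]
  obtain ⟨y₁, ⟨hy₁ball, hy₁span⟩, hy₁z⟩ := hincl _ hznorm ⟨y₂, hy₂span, hz⟩
  have hy₁Y : y₁ ∈ Y := hrY ⟨hy₁ball, hy₁span⟩
  have hy₁dist : ‖y₁ - y₀‖ ≤ r := by
    rw [← dist_eq_norm]; exact Metric.mem_closedBall.mp hy₁ball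
  have hself : lam ⬝ᵥ lam = a ^ 2 := by
    rw [ha, ← real_inner_self_eq_norm_sq]
    simp [dotProduct, PiLp.inner_apply, RCLike.inner_apply, mul_comm]
    rw [EuclideanSpace.norm_sq_eq]; simp [sq, Real.norm_eq_abs, abs_mul_abs_self]
  have hdot : lam ⬝ᵥ (A *ᵥ y₁ - b) = -(ρstar * a) := by
    have h1 : (A *ᵥ y₁ - b : Fin q → ℝ) = fun j => t * lam j := by
      funext j
      have h3 : (t • lam : EuclideanSpace ℝ (Fin q)) j = t * lam j := rfl
      rw [← h3, hy₁z]
    rw [h1]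
    have h4 : (lam ⬝ᵥ fun j => t * lam j) = t * (lam ⬝ᵥ lam) := by
      simp only [dotProduct, Finset.mul_sum]
      exact Finset.sum_congr rfl fun j _ => by ring
    rw [h4, hself]
    by_cases h : lam = 0
    · simp [ha, h]
    · have ha' : 0 < a := norm_pos_iff.mpr h
      rw [htdef, if_neg h]
      field_simp
  have hg : ∀ i, g y₁ i ≤ -(κ / 2) := by
    intro i
    have h1 := (abs_le.mp (hglip i y₁ hy₁Y y₀ hy₀Y)).2
    have h2 : Lg * ‖y₁ - y₀‖ ≤ Lg * r := mul_le_mul_of_nonneg_left hy₁dist hLg.le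
    have h4 : Lg * r ≤ Lg * (κ / (2 * Lg)) := mul_le_mul_of_nonneg_left hrκ hLg.le
    have h5 : Lg * (κ / (2 * Lg)) = κ / 2 := by
      field_simp
    have := hy₀g i
    linarith
  have hmug : mu ⬝ᵥ g y₁ ≤ -(κ / 2) * ∑ i, mu i := by
    rw [dotProduct, Finset.mul_sum]
    refine Finset.sum_le_sum fun i _ => ?_
    have h1 := hg i
    have h2 := hmu i
    nlinarith [mul_le_mul_of_nonneg_left h1 h2]
  have hcsum : c ≤ ∑ i, mu i := by
    have h1 : ∑ i, (mu i) ^ 2 ≤ (∑ i, mu i) ^ 2 := by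
      have h2 : ∀ i ∈ Finset.univ, (mu i) ^ 2 ≤ mu i * ∑ j, mu j := fun i _ => by
        have h3 : mu i ≤ ∑ j, mu j :=
          Finset.single_le_sum (fun j _ => hmu j) (Finset.mem_univ i)
        nlinarith [mul_le_mul_of_nonneg_left h3 (hmu i)]
      calc ∑ i, (mu i) ^ 2 ≤ ∑ i, mu i * ∑ j, mu j := Finset.sum_le_sum h2
        _ = (∑ i, mu i) ^ 2 := by rw [← Finset.sum_mul]; ring
    calc c ≤ Real.sqrt ((∑ i, mu i) ^ 2) := Real.sqrt_le_sqrt h1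
      _ = ∑ i, mu i := Real.sqrt_sq (Finset.sum_nonneg fun i _ => hmu i)
  have hflb : f y₁ ≤ f y₀ + Lf * r := by
    have h1 := (abs_le.mp (hflip y₁ hy₁Y y₀ hy₀Y)).2
    have h2 : Lf * ‖y₁ - y₀‖ ≤ Lf * r := mul_le_mul_of_nonneg_left hy₁dist hLf
    linarith
  have hmain : ρstar * a + κ / 2 * c ≤ f y₀ - 𝓛 + ε + Lf * r := by
    have hd := hdualopt y₁ hy₁Y
    rw [hdot] at hd
    have hsum0 : 0 ≤ ∑ i, mu i := Finset.sum_nonneg fun i _ => hmu i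
    have h2 : κ / 2 * c ≤ κ / 2 * ∑ i, mu i :=
      mul_le_mul_of_nonneg_left hcsum (by linarith)
    have h3 : -(κ / 2) * ∑ i, mu i = -(κ / 2 * ∑ i, mu i) := by ring
    rw [h3] at hmug
    linarith only [hd, hmug, h2, hflb, h𝓛, hε]
  have hρ : 0 < min ρstar (κ / 2) := lt_min hρstar (by linarith)
  rw [le_div_iff₀ hρ]
  have hsq : Real.sqrt (a ^ 2 + ∑ i, (mu i) ^ 2) ≤ a + c := by
    rw [← hc2]
    have h1 : a ^ 2 + c ^ 2 ≤ (a + c) ^ 2 := by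
      have h0 : 0 ≤ a * c := mul_nonneg ha0 hc0
      have he : (a + c) ^ 2 = a ^ 2 + 2 * (a * c) + c ^ 2 := by ring
      linarith only [h0, he]
    calc Real.sqrt (a ^ 2 + c ^ 2) ≤ Real.sqrt ((a + c) ^ 2) := Real.sqrt_le_sqrt h1
      _ = a + c := Real.sqrt_sq (by linarith)
  have h1 : a * min ρstar (κ / 2) ≤ a * ρstar :=
    mul_le_mul_of_nonneg_left (min_le_left _ _) ha0
  have h2 : c * min ρstar (κ / 2) ≤ c * (κ / 2) :=
    mul_le_mul_of_nonneg_left (min_le_right _ _) hc0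
  calc Real.sqrt (a ^ 2 + ∑ i, (mu i) ^ 2) * min ρstar (κ / 2)
      ≤ (a + c) * min ρstar (κ / 2) := mul_le_mul_of_nonneg_right hsq hρ.le
    _ ≤ a * ρstar + c * (κ / 2) := by rw [add_mul]; linarith only [h1, h2]
    _ = ρstar * a + κ / 2 * c := by ring
    _ ≤ f y₀ - 𝓛 + ε + Lf * r := hmain
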